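/- arXiv:math/0504607 — 2 statements merged into one kernel-verified Lean document; each statement's English description precedes it below -/
import Mathlib

section
/- For r ≥ 9, n ≥ 5 with n ≥ r−1 and S := {{1,2},{1,3},…,{1,n},{2,3},{4,5}}, the colorability defect lower bound fails for the Kneser hypergraph without multiplicities: cd^r_{r-2}(S) = 3r−10 > 2(r−1) = (r−1)·χ(kg^r_{r-2}(S)). -/
/-- The family `S = {{1,2},{1,3},…,{1,n},{2,3},{4,5}}` of 2-subsets of `[n]`. -/
def Sfam (n : ℕ) : Finset (Finset ℕ) :=
  ((Finset.Icc 2 n).image fun j => ({1, j} : Finset ℕ)) ∪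
    {({2, 3} : Finset ℕ), ({4, 5} : Finset ℕ)}

/-- An edge of the multiplicity-free Kneser hypergraph `kg^r_s(S)`. -/
def kgEdge (r s : ℕ) (S : Finset (Finset ℕ)) (e : Finset (Finset ℕ)) : Prop :=
  e.card = r ∧ e ⊆ S ∧ ∀ i : ℕ, (e.filter fun T => i ∈ T).card ≤ s

/-- The chromatic number of `kg^r_s(S)`. -/
noncomputable def chromkg (r s : ℕ) (S : Finset (Finset ℕ)) : ℕ :=
  sInf {m | ∃ c : Finset ℕ → Fin m,
    ∀ e, kgEdge r s S e → ∃ A ∈ e, ∃ B ∈ e, c A ≠ c B}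

/-- The `(s,…,s)`-disjoint `r`-colorability defect over the ground set `[n]`. -/
noncomputable def cdN (n r s : ℕ) (S : Finset (Finset ℕ)) : ℕ :=
  n * s - sSup {m | ∃ R : Multiset (Finset ℕ),
    Multiset.card R = r ∧
    (∀ A ∈ R, A ⊆ Finset.Icc 1 n) ∧
    (∀ i : ℕ, R.countP (fun A => i ∈ A) ≤ s) ∧
    (∀ A ∈ R, ∀ T ∈ S, ¬ T ⊆ A) ∧
    m = (R.map Finset.card).sum}

/- ### auxiliary lemmas -/

lemma countP_repl {α : Type*} (p : α → Prop) [DecidablePred p] (k : ℕ) (a : α) :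
    (Multiset.replicate k a).countP p = if p a then k else 0 := by
  induction k with
  | zero => simp
  | succ k ih =>
    rw [Multiset.replicate_succ, Multiset.countP_cons, ih]
    split_ifs <;> omega

lemma countP_three {α : Type*} (R : Multiset α) (p q t : α → Prop)
    [DecidablePred p] [DecidablePred q] [DecidablePred t]
    (h : ∀ a ∈ R, ¬(p a ∧ q a) ∧ ¬(p a ∧ t a) ∧ ¬(q a ∧ t a)) :
    R.countP p + R.countP q + R.countP t ≤ Multiset.card R := by
  induction R using Multiset.induction with
  | empty => simp
  | cons a R ih =>
    obtain ⟨h1, h2, h3⟩ := h a (Multiset.mem_cons_self a R)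
    have ih' := ih (fun b hb => h b (Multiset.mem_cons_of_mem hb))
    simp only [Multiset.countP_cons, Multiset.card_cons]
    by_cases hp : p a
    · by_cases hq : q a
      · exact absurd ⟨hp, hq⟩ h1
      · by_cases ht : t a
        · exact absurd ⟨hp, ht⟩ h2
        · simp only [hp, hq, ht, if_pos, if_neg, not_false_iff]; omega
    · by_cases hq : q a
      · by_cases ht : t a
        · exact absurd ⟨hq, ht⟩ h3
        · simp only [hp, hq, ht, if_pos, if_neg, not_false_iff]; omega
      · simp only [hp, hq, if_neg, not_false_iff]; split_ifs <;> omega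

lemma sum_card_eq (n : ℕ) (R : Multiset (Finset ℕ)) (h : ∀ A ∈ R, A ⊆ Finset.Icc 1 n) :
    (R.map Finset.card).sum = ∑ i ∈ Finset.Icc 1 n, R.countP (fun A => i ∈ A) := by
  induction R using Multiset.induction with
  | empty => simp
  | cons A R ih =>
    have hA : A ⊆ Finset.Icc 1 n := h A (Multiset.mem_cons_self A R)
    have ih' := ih (fun B hB => h B (Multiset.mem_cons_of_mem hB))
    simp only [Multiset.map_cons, Multiset.sum_cons, Multiset.countP_cons]
    rw [Finset.sum_add_distrib, ih']
    have : A.card = ∑ i ∈ Finset.Icc 1 n, if i ∈ A then 1 else 0 := by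
      rw [← Finset.card_filter, Finset.filter_mem_eq_inter, Finset.inter_eq_right.mpr hA]
    omega

lemma mem_Sfam {n : ℕ} {T : Finset ℕ} :
    T ∈ Sfam n ↔ (∃ j, 2 ≤ j ∧ j ≤ n ∧ T = {1, j}) ∨ T = {2, 3} ∨ T = {4, 5} := by
  simp only [Sfam, Finset.mem_union, Finset.mem_image, Finset.mem_Icc, Finset.mem_insert,
    Finset.mem_singleton]
  constructor
  · rintro (⟨j, ⟨h1, h2⟩, rfl⟩ | h | h)
    · exact Or.inl ⟨j, h1, h2, rfl⟩
    · exact Or.inr (Or.inl h)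
    · exact Or.inr (Or.inr h)
  · rintro (⟨j, h1, h2, rfl⟩ | h | h)
    · exact Or.inl ⟨j, ⟨h1, h2⟩, rfl⟩
    · exact Or.inr (Or.inl h)
    · exact Or.inr (Or.inr h)

section main
variable {n r : ℕ}

/-- The value of the sSup set in `cdN`. -/
lemma sSup_val (hn : 5 ≤ n) (hr : 9 ≤ r) :
    sSup {m | ∃ R : Multiset (Finset ℕ),
      Multiset.card R = r ∧
      (∀ A ∈ R, A ⊆ Finset.Icc 1 n) ∧
      (∀ i : ℕ, R.countP (fun A => i ∈ A) ≤ r - 2) ∧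
      (∀ A ∈ R, ∀ T ∈ Sfam n, ¬ T ⊆ A) ∧
      m = (R.map Finset.card).sum} = (r - 2) * (n - 3) + 4 := by
  apply IsGreatest.csSup_eq
  constructor
  · -- membership: explicit construction
    set A1 : Finset ℕ := insert 2 (insert 4 (Finset.Icc 6 n)) with hA1def
    set A2 : Finset ℕ := ({3, 5} : Finset ℕ) with hA2def
    have hA1mem : ∀ i, i ∈ A1 ↔ (i = 2 ∨ i = 4 ∨ (6 ≤ i ∧ i ≤ n)) := by
      intro i; simp [hA1def, Finset.mem_Icc]
    have hA2mem : ∀ i, i ∈ A2 ↔ (i = 3 ∨ i = 5) := by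
      intro i; simp [hA2def]
    refine ⟨Multiset.replicate (r - 2) A1 + Multiset.replicate 2 A2, ?_, ?_, ?_, ?_, ?_⟩
    · simp [Multiset.card_replicate]; omega
    · intro A hA
      rcases Multiset.mem_add.mp hA with h | h <;>
        rw [Multiset.eq_of_mem_replicate h] <;> intro x hx <;>
        simp only [Finset.mem_Icc]
      · rw [hA1mem] at hx; omega
      · rw [hA2mem] at hx; omega
    · intro i
      rw [Multiset.countP_add, countP_repl, countP_repl]
      by_cases h1 : i ∈ A1
      · have h2 : i ∉ A2 := by rw [hA1mem] at h1; rw [hA2mem]; omega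
        simp [h1, h2]
      · simp only [h1, if_false]
        split_ifs <;> omega
    · intro A hA T hT
      have hT' := mem_Sfam.mp hT
      rcases Multiset.mem_add.mp hA with h | h <;> rw [Multiset.eq_of_mem_replicate h] <;>
        intro hsub
      · rcases hT' with ⟨j, _, _, rfl⟩ | rfl | rfl
        · have : (1 : ℕ) ∈ A1 := hsub (by simp)
          rw [hA1mem] at this; omega
        · have : (3 : ℕ) ∈ A1 := hsub (by simp)
          rw [hA1mem] at this; omega
        · have : (5 : ℕ) ∈ A1 := hsub (by simp)
          rw [hA1mem] at this; omega
      · rcases hT' with ⟨j, _, _, rfl⟩ | rfl | rfl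
        · have : (1 : ℕ) ∈ A2 := hsub (by simp)
          rw [hA2mem] at this; omega
        · have : (2 : ℕ) ∈ A2 := hsub (by simp)
          rw [hA2mem] at this; omega
        · have : (4 : ℕ) ∈ A2 := hsub (by simp)
          rw [hA2mem] at this; omega
    · have hc1 : A1.card = n - 3 := by
        rw [hA1def]
        rw [Finset.card_insert_of_notMem (by simp [Finset.mem_Icc]),
          Finset.card_insert_of_notMem (by simp [Finset.mem_Icc]), Nat.card_Icc]
        omega
      have hc2 : A2.card = 2 := by rw [hA2def]; decide
      rw [Multiset.map_add, Multiset.sum_add, Multiset.map_replicate, Multiset.map_replicate,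
        Multiset.sum_replicate, Multiset.sum_replicate, hc1, hc2, smul_eq_mul, smul_eq_mul]
  · -- upper bound
    rintro m ⟨R, hcard, hsub, hcount, havoid, rfl⟩
    -- exclusivity facts
    have excl12 : ∀ A ∈ R, ¬((1:ℕ) ∈ A ∧ (2:ℕ) ∈ A) := by
      rintro A hA ⟨h1, h2⟩
      exact havoid A hA {1, 2} (mem_Sfam.mpr (Or.inl ⟨2, le_refl 2, by omega, rfl⟩))
        (by intro x hx; simp at hx; rcases hx with rfl | rfl <;> assumption)
    have excl13 : ∀ A ∈ R, ¬((1:ℕ) ∈ A ∧ (3:ℕ) ∈ A) := by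
      rintro A hA ⟨h1, h2⟩
      exact havoid A hA {1, 3} (mem_Sfam.mpr (Or.inl ⟨3, by omega, by omega, rfl⟩))
        (by intro x hx; simp at hx; rcases hx with rfl | rfl <;> assumption)
    have excl14 : ∀ A ∈ R, ¬((1:ℕ) ∈ A ∧ (4:ℕ) ∈ A) := by
      rintro A hA ⟨h1, h2⟩
      exact havoid A hA {1, 4} (mem_Sfam.mpr (Or.inl ⟨4, by omega, by omega, rfl⟩))
        (by intro x hx; simp at hx; rcases hx with rfl | rfl <;> assumption)
    have excl15 : ∀ A ∈ R, ¬((1:ℕ) ∈ A ∧ (5:ℕ) ∈ A) := by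
      rintro A hA ⟨h1, h2⟩
      exact havoid A hA {1, 5} (mem_Sfam.mpr (Or.inl ⟨5, by omega, by omega, rfl⟩))
        (by intro x hx; simp at hx; rcases hx with rfl | rfl <;> assumption)
    have excl23 : ∀ A ∈ R, ¬((2:ℕ) ∈ A ∧ (3:ℕ) ∈ A) := by
      rintro A hA ⟨h1, h2⟩
      exact havoid A hA {2, 3} (mem_Sfam.mpr (Or.inr (Or.inl rfl)))
        (by intro x hx; simp at hx; rcases hx with rfl | rfl <;> assumption)
    have excl45 : ∀ A ∈ R, ¬((4:ℕ) ∈ A ∧ (5:ℕ) ∈ A) := by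
      rintro A hA ⟨h1, h2⟩
      exact havoid A hA {4, 5} (mem_Sfam.mpr (Or.inr (Or.inr rfl)))
        (by intro x hx; simp at hx; rcases hx with rfl | rfl <;> assumption)
    have key1 : R.countP (fun A => 1 ∈ A) + R.countP (fun A => 2 ∈ A)
        + R.countP (fun A => 3 ∈ A) ≤ r := by
      rw [← hcard]
      exact countP_three R _ _ _ (fun a ha => ⟨excl12 a ha, excl13 a ha, excl23 a ha⟩)
    have key2 : R.countP (fun A => 1 ∈ A) + R.countP (fun A => 4 ∈ A)
        + R.countP (fun A => 5 ∈ A) ≤ r := by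
      rw [← hcard]
      exact countP_three R _ _ _ (fun a ha => ⟨excl14 a ha, excl15 a ha, excl45 a ha⟩)
    rw [sum_card_eq n R hsub]
    have hdecomp : Finset.Icc 1 n
        = insert 1 (insert 2 (insert 3 (insert 4 (insert 5 (Finset.Icc 6 n))))) := by
      ext x; simp [Finset.mem_Icc]; omega
    rw [hdecomp]
    rw [Finset.sum_insert (by simp [Finset.mem_Icc]),
      Finset.sum_insert (by simp [Finset.mem_Icc]),
      Finset.sum_insert (by simp [Finset.mem_Icc]),
      Finset.sum_insert (by simp [Finset.mem_Icc]),
      Finset.sum_insert (by simp [Finset.mem_Icc])]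
    have htail : ∑ i ∈ Finset.Icc 6 n, R.countP (fun A => i ∈ A) ≤ (n - 5) * (r - 2) := by
      calc ∑ i ∈ Finset.Icc 6 n, R.countP (fun A => i ∈ A)
          ≤ ∑ _i ∈ Finset.Icc 6 n, (r - 2) := Finset.sum_le_sum (fun i _ => hcount i)
        _ = (n - 5) * (r - 2) := by
            rw [Finset.sum_const, smul_eq_mul, Nat.card_Icc]; congr 1
    have hgoal : (r - 2) * (n - 3) + 4 = 2 * r + (n - 5) * (r - 2) := by
      obtain ⟨n', rfl⟩ : ∃ k, n = k + 5 := ⟨n - 5, by omega⟩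
      obtain ⟨r', rfl⟩ : ∃ k, r = k + 9 := ⟨r - 9, by omega⟩
      have e1 : n' + 5 - 3 = n' + 2 := by omega
      have e2 : r' + 9 - 2 = r' + 7 := by omega
      have e3 : n' + 5 - 5 = n' := by omega
      rw [e1, e2, e3]; ring
    omega

/-- Every edge of the Kneser hypergraph contains both `{2,3}` and `{4,5}`. -/
lemma edge_contains (hr : 9 ≤ r) {e : Finset (Finset ℕ)}
    (he : kgEdge r (r - 2) (Sfam n) e) :
    ({2, 3} : Finset ℕ) ∈ e ∧ ({4, 5} : Finset ℕ) ∈ e := by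
  obtain ⟨hcard, hsubS, hcnt⟩ := he
  have h1 := hcnt 1
  constructor
  · by_contra h23
    have hsub : e ⊆ (e.filter fun T => (1:ℕ) ∈ T) ∪ {({4, 5} : Finset ℕ)} := by
      intro T hT
      rcases mem_Sfam.mp (hsubS hT) with ⟨j, _, _, rfl⟩ | rfl | rfl
      · exact Finset.mem_union_left _ (Finset.mem_filter.mpr ⟨hT, by simp⟩)
      · exact absurd hT h23
      · exact Finset.mem_union_right _ (by simp)
    have := (Finset.card_le_card hsub).trans (Finset.card_union_le _ _)
    simp only [Finset.card_singleton] at this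
    omega
  · by_contra h45
    have hsub : e ⊆ (e.filter fun T => (1:ℕ) ∈ T) ∪ {({2, 3} : Finset ℕ)} := by
      intro T hT
      rcases mem_Sfam.mp (hsubS hT) with ⟨j, _, _, rfl⟩ | rfl | rfl
      · exact Finset.mem_union_left _ (Finset.mem_filter.mpr ⟨hT, by simp⟩)
      · exact Finset.mem_union_right _ (by simp)
      · exact absurd hT h45
    have := (Finset.card_le_card hsub).trans (Finset.card_union_le _ _)
    simp only [Finset.card_singleton] at this
    omega

/-- An explicit edge of the Kneser hypergraph. -/
lemma edge_exists (hn : 5 ≤ n) (hr : 9 ≤ r) (hnr : r - 1 ≤ n) :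
    kgEdge r (r - 2) (Sfam n)
      (((Finset.Icc 2 (r - 1)).image fun j => ({1, j} : Finset ℕ)) ∪
        {({2, 3} : Finset ℕ), ({4, 5} : Finset ℕ)}) := by
  set I : Finset (Finset ℕ) := (Finset.Icc 2 (r - 1)).image fun j => ({1, j} : Finset ℕ)
    with hIdef
  have hInotone : ∀ T ∈ I, (1 : ℕ) ∈ T := by
    rintro T hT
    obtain ⟨j, _, rfl⟩ := Finset.mem_image.mp hT
    simp
  have hImem : ∀ T ∈ I, ∃ j, 2 ≤ j ∧ j ≤ r - 1 ∧ T = {1, j} := by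
    rintro T hT
    obtain ⟨j, hj, rfl⟩ := Finset.mem_image.mp hT
    rw [Finset.mem_Icc] at hj
    exact ⟨j, hj.1, hj.2, rfl⟩
  have hIcard : I.card = r - 2 := by
    rw [hIdef, Finset.card_image_of_injOn, Nat.card_Icc]
    · omega
    · intro a ha b hb hab
      rw [Finset.mem_coe, Finset.mem_Icc] at ha hb
      have hab' : ({1, a} : Finset ℕ) = {1, b} := hab
      have : a ∈ ({1, b} : Finset ℕ) := by rw [← hab']; simp
      simp at this
      omega
  have h23I : ({2, 3} : Finset ℕ) ∉ I := fun h => by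
    have := hInotone _ h; simp at this
  have h45I : ({4, 5} : Finset ℕ) ∉ I := fun h => by
    have := hInotone _ h; simp at this
  refine ⟨?_, ?_, ?_⟩
  · rw [Finset.card_union_of_disjoint, hIcard]
    · have : ({2, 3} : Finset ℕ) ≠ ({4, 5} : Finset ℕ) := by decide
      rw [Finset.card_insert_of_notMem (by simpa using this), Finset.card_singleton]
      omega
    · rw [Finset.disjoint_right]
      intro T hT
      simp only [Finset.mem_insert, Finset.mem_singleton] at hT
      rcases hT with rfl | rfl
      · exact h23I
      · exact h45I
  · intro T hT
    rcases Finset.mem_union.mp hT with h | h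
    · obtain ⟨j, hj1, hj2, rfl⟩ := hImem _ h
      exact mem_Sfam.mpr (Or.inl ⟨j, hj1, by omega, rfl⟩)
    · simp only [Finset.mem_insert, Finset.mem_singleton] at h
      rcases h with rfl | rfl
      · exact mem_Sfam.mpr (Or.inr (Or.inl rfl))
      · exact mem_Sfam.mpr (Or.inr (Or.inr rfl))
  · intro i
    by_cases hi : i = 1
    · subst hi
      have hsub : (I ∪ {({2, 3} : Finset ℕ), ({4, 5} : Finset ℕ)}).filter
          (fun T => (1:ℕ) ∈ T) ⊆ I := by
        intro T hT
        obtain ⟨hT1, hT2⟩ := Finset.mem_filter.mp hT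
        rcases Finset.mem_union.mp hT1 with h | h
        · exact h
        · simp only [Finset.mem_insert, Finset.mem_singleton] at h
          rcases h with rfl | rfl <;> simp at hT2
      have := Finset.card_le_card hsub
      omega
    · have hsub : (I ∪ {({2, 3} : Finset ℕ), ({4, 5} : Finset ℕ)}).filter
          (fun T => i ∈ T) ⊆ {({1, i} : Finset ℕ), ({2, 3} : Finset ℕ), ({4, 5} : Finset ℕ)} := by
        intro T hT
        obtain ⟨hT1, hT2⟩ := Finset.mem_filter.mp hT
        rcases Finset.mem_union.mp hT1 with h | h
        · obtain ⟨j, _, _, rfl⟩ := hImem _ h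
          simp only [Finset.mem_insert, Finset.mem_singleton] at hT2 ⊢
          rcases hT2 with rfl | rfl
          · exact absurd rfl hi
          · left; rfl
        · simp only [Finset.mem_insert, Finset.mem_singleton] at h ⊢
          tauto
      have h3 : ({({1, i} : Finset ℕ), ({2, 3} : Finset ℕ), ({4, 5} : Finset ℕ)} :
          Finset (Finset ℕ)).card ≤ 3 :=
        (Finset.card_insert_le _ _).trans (by
          have := Finset.card_insert_le ({2, 3} : Finset ℕ)
            ({({4, 5} : Finset ℕ)} : Finset (Finset ℕ))
          simp only [Finset.card_singleton] at this
          omega)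
      have := (Finset.card_le_card hsub).trans h3
      omega

lemma chrom_val (hn : 5 ≤ n) (hr : 9 ≤ r) (hnr : r - 1 ≤ n) :
    chromkg r (r - 2) (Sfam n) = 2 := by
  have h2mem : 2 ∈ {m | ∃ c : Finset ℕ → Fin m,
      ∀ e, kgEdge r (r - 2) (Sfam n) e → ∃ A ∈ e, ∃ B ∈ e, c A ≠ c B} := by
    refine ⟨fun T => if T = ({2, 3} : Finset ℕ) then 0 else 1, fun e he => ?_⟩
    obtain ⟨h23, h45⟩ := edge_contains hr he
    exact ⟨{2, 3}, h23, {4, 5}, h45, by decide⟩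
  apply le_antisymm
  · exact Nat.sInf_le h2mem
  · refine le_csInf ⟨2, h2mem⟩ (fun m hm => ?_)
    obtain ⟨c, hc⟩ := hm
    by_contra h
    push_neg at h
    interval_cases m
    · exact (c ∅).elim0
    · obtain ⟨A, _, B, _, hAB⟩ := hc _ (edge_exists hn hr hnr)
      exact hAB (Subsingleton.elim _ _)

end main

/-- For `r ≥ 9`, `n ≥ 5`, `n ≥ r-1` and `S = {{1,2},…,{1,n},{2,3},{4,5}}`,
the colorability defect lower bound fails for the Kneser hypergraph without
multiplicities: `cd^r_{r-2}(S) = 3r - 10 > 2(r-1) = (r-1)·χ(kg^r_{r-2}(S))`. -/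
theorem stmt13 (n r : ℕ) (hn : 5 ≤ n) (hr : 9 ≤ r) (hnr : r - 1 ≤ n) :
    cdN n r (r - 2) (Sfam n) = 3 * r - 10 ∧
    (r - 1) * chromkg r (r - 2) (Sfam n) = 2 * (r - 1) ∧
    2 * (r - 1) < cdN n r (r - 2) (Sfam n) := by
  have h1 : cdN n r (r - 2) (Sfam n) = 3 * r - 10 := by
    rw [cdN, sSup_val hn hr]
    obtain ⟨n', rfl⟩ : ∃ k, n = k + 5 := ⟨n - 5, by omega⟩
    obtain ⟨r', rfl⟩ : ∃ k, r = k + 9 := ⟨r - 9, by omega⟩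
    have q1 : (n' + 5) * (r' + 9 - 2) = n' * r' + 7 * n' + 5 * r' + 35 := by
      rw [show r' + 9 - 2 = r' + 7 from by omega]; ring
    have q2 : (r' + 9 - 2) * (n' + 5 - 3) + 4 = n' * r' + 2 * r' + 7 * n' + 18 := by
      rw [show r' + 9 - 2 = r' + 7 from by omega, show n' + 5 - 3 = n' + 2 from by omega]
      ring
    rw [q1, q2]
    have : n' * r' + 2 * r' + 7 * n' + 18 ≤ n' * r' + 7 * n' + 5 * r' + 35 := by omega
    omega
  refine ⟨h1, ?_, ?_⟩
  · rw [chrom_val hn hr hnr]; ring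
  · rw [h1]; omega
end

section
/- For n, r ≥ 4 with r ≤ C(n,2) and n(r−1) − r > (n−2)(r−1): the colorability defect lower bound fails for kg^r_{r-1}(binom([n],2)), i.e., (r−1)·χ(kg^r_{r-1}(binom([n],2))) ≤ (r−1)(n−2) < n(r−1) − r = cd^r_{r-1}(binom([n],2)) whenever r < 2(r−1), which holds for all r ≥ 3. -/
/-- The family of all 2-subsets of `[n] = {1,…,n}`. -/
def pairs (n : ℕ) : Finset (Finset ℕ) := (Finset.Icc 1 n).powersetCard 2

private lemma countP_replicate' (k : ℕ) (p : Finset ℕ → Prop) [DecidablePred p]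
    (a : Finset ℕ) :
    Multiset.countP p (Multiset.replicate k a) = if p a then k else 0 := by
  induction k with
  | zero => simp
  | succ k ih => rw [Multiset.replicate_succ, Multiset.countP_cons, ih]; split <;> simp

/-- Basic facts about the minimum of a pair. -/
private lemma pairs_min_facts {n : ℕ} {T : Finset ℕ} (hT : T ∈ pairs n) :
    T.min.getD n ∈ T ∧ 1 ≤ T.min.getD n ∧ T.min.getD n + 1 ≤ n ∧
    ∀ x ∈ T, T.min.getD n ≤ x ∧ x ≤ n := by
  rw [pairs, Finset.mem_powersetCard] at hT
  obtain ⟨hsub, hcard⟩ := hT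
  have hne : T.Nonempty := Finset.card_pos.mp (by omega)
  have hgd : T.min.getD n = T.min' hne := by rw [← Finset.coe_min' hne]; rfl
  rw [hgd]
  set m := T.min' hne with hm
  have hmem : m ∈ T := Finset.min'_mem T hne
  have hle : ∀ x ∈ T, m ≤ x := fun x hx => Finset.min'_le T x hx
  have hbd : ∀ x ∈ T, 1 ≤ x ∧ x ≤ n := by
    intro x hx
    have := hsub hx
    rw [Finset.mem_Icc] at this
    exact this
  have h1 : 1 ≤ m := (hbd m hmem).1
  -- there is a second element
  have herr : (T.erase m).Nonempty := by
    rw [← Finset.card_pos, Finset.card_erase_of_mem hmem]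
    omega
  obtain ⟨y, hy⟩ := herr
  have hyne : y ≠ m := (Finset.mem_erase.mp hy).1
  have hyT : y ∈ T := (Finset.mem_erase.mp hy).2
  have : m < y := lt_of_le_of_ne (hle y hyT) (Ne.symm hyne)
  have := (hbd y hyT).2
  exact ⟨hmem, h1, by omega, fun x hx => ⟨hle x hx, (hbd x hx).2⟩⟩

private lemma chrom_le {n r : ℕ} (hn : 4 ≤ n) (hr : 4 ≤ r) :
    chromkg r (r - 1) (pairs n) ≤ n - 2 := by
  apply Nat.sInf_le
  refine ⟨fun T => ⟨min (T.min.getD n) (n - 2) - 1, by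
    have := min_le_right (T.min.getD n) (n - 2); omega⟩, ?_⟩
  intro e he
  by_contra hcon
  push_neg at hcon
  obtain ⟨hcard, hsub, hcnt⟩ := he
  -- value function
  set f : Finset ℕ → ℕ := fun T => T.min.getD n with hf
  have hfeq : ∀ A ∈ e, ∀ B ∈ e, min (f A) (n - 2) - 1 = min (f B) (n - 2) - 1 := by
    intro A hA B hB
    have := hcon A hA B hB
    exact congrArg Fin.val this
  by_cases hex : ∃ T0 ∈ e, f T0 ≤ n - 3
  · obtain ⟨T0, hT0, hT0le⟩ := hex
    have h1T0 : 1 ≤ f T0 := (pairs_min_facts (hsub hT0)).2.1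
    have hall : ∀ T ∈ e, f T0 ∈ T := by
      intro T hT
      have h1T : 1 ≤ f T := (pairs_min_facts (hsub hT)).2.1
      have heq := hfeq T hT T0 hT0
      simp only [hf] at heq h1T h1T0 hT0le
      have : f T = f T0 := by simp only [hf]; omega
      rw [← this]
      exact (pairs_min_facts (hsub hT)).1
    have hfe : e.filter (fun T => f T0 ∈ T) = e := Finset.filter_eq_self.mpr hall
    have hc := hcnt (f T0)
    rw [hfe, hcard] at hc
    omega
  · push_neg at hex
    -- every pair lies in {n-2, n-1, n}
    have hsub3 : e ⊆ (Finset.Icc (n - 2) n).powersetCard 2 := by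
      intro T hT
      have hfacts := pairs_min_facts (hsub hT)
      have hfT := hex T hT
      simp only [hf] at hfT
      rw [Finset.mem_powersetCard]
      constructor
      · intro x hx
        rw [Finset.mem_Icc]
        have := hfacts.2.2.2 x hx
        omega
      · have h2 := hsub hT
        rw [pairs, Finset.mem_powersetCard] at h2
        exact h2.2
    have hcard3 : ((Finset.Icc (n - 2) n).powersetCard 2).card = 3 := by
      rw [Finset.card_powersetCard, Nat.card_Icc]
      have h3 : n + 1 - (n - 2) = 3 := by omega
      rw [h3]
      decide
    have hle3 := Finset.card_le_card hsub3
    rw [hcard, hcard3] at hle3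
    omega

private lemma sSup_eq_r {n r : ℕ} (hn : 4 ≤ n) (hr : 4 ≤ r) :
    sSup {m | ∃ R : Multiset (Finset ℕ),
      Multiset.card R = r ∧
      (∀ A ∈ R, A ⊆ Finset.Icc 1 n) ∧
      (∀ i : ℕ, R.countP (fun A => i ∈ A) ≤ r - 1) ∧
      (∀ A ∈ R, ∀ T ∈ pairs n, ¬ T ⊆ A) ∧
      m = (R.map Finset.card).sum} = r := by
  have hub : ∀ m ∈ {m | ∃ R : Multiset (Finset ℕ),
      Multiset.card R = r ∧
      (∀ A ∈ R, A ⊆ Finset.Icc 1 n) ∧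
      (∀ i : ℕ, R.countP (fun A => i ∈ A) ≤ r - 1) ∧
      (∀ A ∈ R, ∀ T ∈ pairs n, ¬ T ⊆ A) ∧
      m = (R.map Finset.card).sum}, m ≤ r := by
    rintro m ⟨R, hRcard, hRsub, _, hRpair, rfl⟩
    have hcard1 : ∀ A ∈ R, A.card ≤ 1 := by
      intro A hA
      by_contra h
      push_neg at h
      obtain ⟨T, hTsub, hTcard⟩ := Finset.exists_subset_card_eq (n := 2) (by omega : 2 ≤ A.card)
      exact hRpair A hA T (by
        rw [pairs, Finset.mem_powersetCard]
        exact ⟨hTsub.trans (hRsub A hA), hTcard⟩) hTsub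
    calc (R.map Finset.card).sum ≤ Multiset.card (R.map Finset.card) • 1 :=
          Multiset.sum_le_card_nsmul _ _ (by
            intro x hx
            obtain ⟨A, hA, rfl⟩ := Multiset.mem_map.mp hx
            exact hcard1 A hA)
      _ = r := by rw [Multiset.card_map, hRcard, smul_eq_mul, mul_one]
  have hin : r ∈ {m | ∃ R : Multiset (Finset ℕ),
      Multiset.card R = r ∧
      (∀ A ∈ R, A ⊆ Finset.Icc 1 n) ∧
      (∀ i : ℕ, R.countP (fun A => i ∈ A) ≤ r - 1) ∧
      (∀ A ∈ R, ∀ T ∈ pairs n, ¬ T ⊆ A) ∧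
      m = (R.map Finset.card).sum} := by
    refine ⟨Multiset.replicate (r - 1) {1} + {({2} : Finset ℕ)}, ?_, ?_, ?_, ?_, ?_⟩
    · simp; omega
    · intro A hA
      rw [Multiset.mem_add] at hA
      rcases hA with hA | hA
      · rw [Multiset.eq_of_mem_replicate hA]
        intro x hx
        rw [Finset.mem_singleton] at hx
        rw [hx, Finset.mem_Icc]; omega
      · rw [Multiset.mem_singleton] at hA
        rw [hA]
        intro x hx
        rw [Finset.mem_singleton] at hx
        rw [hx, Finset.mem_Icc]; omega
    · intro i
      rw [Multiset.countP_add, countP_replicate']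
      have h2 : Multiset.countP (fun A => i ∈ A) ({({2} : Finset ℕ)} : Multiset (Finset ℕ))
          = if i ∈ ({2} : Finset ℕ) then 1 else 0 := by
        rw [← Multiset.cons_zero, Multiset.countP_cons]
        split <;> simp
      rw [h2]
      by_cases h1 : i ∈ ({1} : Finset ℕ)
      · have : i = 1 := Finset.mem_singleton.mp h1
        subst this
        simp
      · simp [h1]
        split <;> omega
    · intro A hA T hT hTA
      rw [pairs, Finset.mem_powersetCard] at hT
      have hT2 := hT.2
      have : A.card ≤ 1 := by
        rw [Multiset.mem_add] at hA
        rcases hA with hA | hA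
        · rw [Multiset.eq_of_mem_replicate hA]; simp
        · rw [Multiset.mem_singleton] at hA; rw [hA]; simp
      have := Finset.card_le_card hTA
      omega
    · rw [Multiset.map_add, Multiset.sum_add]
      simp [Multiset.map_replicate]
      omega
  exact le_antisymm (csSup_le ⟨r, hin⟩ hub) (le_csSup ⟨r, hub⟩ hin)

/-- For `n, r ≥ 4` with `r ≤ C(n,2)`, the colorability defect lower bound fails
for `kg^r_{r-1}(binom([n],2))`:
`(r-1)·χ(kg^r_{r-1}(binom([n],2))) ≤ (r-1)(n-2) < n(r-1) - r = cd^r_{r-1}(binom([n],2))`. -/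
theorem stmt16 (n r : ℕ) (hn : 4 ≤ n) (hr : 4 ≤ r) (hrc : r ≤ n.choose 2) :
    (r - 1) * chromkg r (r - 1) (pairs n) ≤ (r - 1) * (n - 2) ∧
    (r - 1) * (n - 2) < n * (r - 1) - r ∧
    cdN n r (r - 1) (pairs n) = n * (r - 1) - r := by
  refine ⟨Nat.mul_le_mul_left _ (chrom_le hn hr), ?_, ?_⟩
  · have h1 : (r - 1) * (n - 2) + (r - 1) * 2 = (r - 1) * n := by
      rw [← Nat.mul_add]
      congr 1
      omega
    have h2 : 4 * (r - 1) ≤ n * (r - 1) := Nat.mul_le_mul_right _ hn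
    have h3 : (r - 1) * n = n * (r - 1) := Nat.mul_comm _ _
    omega
  · rw [cdN, sSup_eq_r hn hr]
end
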